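/- Let ε = (ε_1,…,ε_N)′ be i.i.d. real random variables with mean 0, variance σ², fourth moment μ₄ and finite eighth moments, and set ε* = Jε with entries ε*_i, π₁ = Σ_r (J_rr)² and π₂ = Σ_r Σ_s (J_rs)⁴. Then E[ (Σ_{i=1}^N (ε*_i)⁴ / π₂)² ] − ( μ₄ − 3σ⁴ + 3σ⁴·π₁/π₂ )² → 0 as nT → ∞ (along any sequence with n ≥ 2, T ≥ 2 and nT → ∞). -/

import Mathlib

open Matrix Finset MeasureTheory ProbabilityTheory Filter
open scoped Kronecker

/-- The two-way within-transformation matrix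
`J = (I_T − T⁻¹ι_Tι_T′) ⊗ (I_n − n⁻¹ι_nι_n′)`. -/
noncomputable def twoWayJ (n T : ℕ) : Matrix (Fin T × Fin n) (Fin T × Fin n) ℝ :=
  ((1 : Matrix (Fin T) (Fin T) ℝ) - (T : ℝ)⁻¹ • Matrix.of (fun _ _ => (1 : ℝ))) ⊗ₖ
  ((1 : Matrix (Fin n) (Fin n) ℝ) - (n : ℝ)⁻¹ • Matrix.of (fun _ _ => (1 : ℝ)))

set_option linter.unusedSectionVars false
set_option maxHeartbeats 1000000

section MatAux

lemma twoWayJ_apply (n T : ℕ) (t s : Fin T) (i j : Fin n) :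
    twoWayJ n T (t, i) (s, j)
      = ((if t = s then (1:ℝ) else 0) - (T:ℝ)⁻¹)
        * ((if i = j then (1:ℝ) else 0) - (n:ℝ)⁻¹) := by
  simp [twoWayJ, Matrix.kroneckerMap_apply, Matrix.sub_apply, Matrix.one_apply,
    Matrix.smul_apply, Matrix.of_apply, smul_eq_mul, mul_one]

variable {k : ℕ}

lemma eMat_erase_sum (hk : 2 ≤ k) (t : Fin k) (c : ℝ)
    (F : ℝ → ℝ) :
    (∑ s, F ((if t = s then (1:ℝ) else 0) - c))
      = F (1 - c) + ((k:ℝ) - 1) * F (0 - c) := by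
  rw [← Finset.add_sum_erase Finset.univ _ (Finset.mem_univ t)]
  congr 1
  · rw [if_pos rfl]
  · have h1 : ∀ s ∈ Finset.univ.erase t,
        F ((if t = s then (1:ℝ) else 0) - c) = F (0 - c) := by
      intro s hs
      rw [if_neg (fun h => (Finset.mem_erase.mp hs).1 h.symm)]
    rw [Finset.sum_congr rfl h1, Finset.sum_const, Finset.card_erase_of_mem (Finset.mem_univ t)]
    have : ((Finset.univ : Finset (Fin k)).card - 1 : ℕ) = k - 1 := by simp
    rw [this, nsmul_eq_mul, Nat.cast_sub (by omega : 1 ≤ k), Nat.cast_one]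

lemma eMat_abs_row_sum (hk : 2 ≤ k) (t : Fin k) :
    (∑ s, |(if t = s then (1:ℝ) else 0) - (k:ℝ)⁻¹|) ≤ 2 := by
  have hk0 : (0:ℝ) < (k:ℝ) := by
    have : (2:ℝ) ≤ (k:ℝ) := by exact_mod_cast hk
    linarith
  have hc0 : (0:ℝ) < (k:ℝ)⁻¹ := by positivity
  have hc1 : (k:ℝ)⁻¹ ≤ 1 := by
    rw [inv_le_one_iff₀]; right
    have : (2:ℝ) ≤ (k:ℝ) := by exact_mod_cast hk
    linarith
  have hck : (k:ℝ) * (k:ℝ)⁻¹ = 1 := mul_inv_cancel₀ (ne_of_gt hk0)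
  rw [eMat_erase_sum hk t _ (fun x => |x|)]
  rw [abs_of_nonneg (by linarith), zero_sub, abs_neg, abs_of_nonneg (le_of_lt hc0)]
  nlinarith [hc0, hc1, hck]

lemma eMat_sq_row_sum (hk : 2 ≤ k) (t : Fin k) :
    (∑ s, ((if t = s then (1:ℝ) else 0) - (k:ℝ)⁻¹) ^ 2) = 1 - (k:ℝ)⁻¹ := by
  have hk0 : (0:ℝ) < (k:ℝ) := by
    have : (2:ℝ) ≤ (k:ℝ) := by exact_mod_cast hk
    linarith
  have hck : (k:ℝ) * (k:ℝ)⁻¹ = 1 := mul_inv_cancel₀ (ne_of_gt hk0)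
  rw [eMat_erase_sum hk t _ (fun x => x ^ 2)]
  nlinarith [hck]

lemma eMat_four_sum (hk : 2 ≤ k) :
    ((k:ℝ) / 16) ≤ ∑ t : Fin k, ∑ s : Fin k, ((if t = s then (1:ℝ) else 0) - (k:ℝ)⁻¹) ^ 4 := by
  have hk0 : (0:ℝ) < (k:ℝ) := by
    have : (2:ℝ) ≤ (k:ℝ) := by exact_mod_cast hk
    linarith
  have hk2 : (2:ℝ) ≤ (k:ℝ) := by exact_mod_cast hk
  have hc2 : (k:ℝ)⁻¹ ≤ 2⁻¹ := by
    rw [inv_le_inv₀ hk0 (by norm_num)]; exact hk2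
  have hdiag : ∀ t : Fin k, ((1:ℝ)/16)
      ≤ ∑ s : Fin k, ((if t = s then (1:ℝ) else 0) - (k:ℝ)⁻¹) ^ 4 := by
    intro t
    have h1 : ((1:ℝ) - (k:ℝ)⁻¹) ^ 4
        ≤ ∑ s : Fin k, ((if t = s then (1:ℝ) else 0) - (k:ℝ)⁻¹) ^ 4 := by
      have := Finset.single_le_sum
        (f := fun s : Fin k => ((if t = s then (1:ℝ) else 0) - (k:ℝ)⁻¹) ^ 4)
        (fun s _ => by positivity) (Finset.mem_univ t)
      simpa using this
    have h2 : ((1:ℝ)/2) ^ 4 ≤ ((1:ℝ) - (k:ℝ)⁻¹) ^ 4 := by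
      refine pow_le_pow_left₀ (by norm_num) (by linarith) 4
    nlinarith [h1, h2]
  calc (k:ℝ)/16 = ∑ _t : Fin k, ((1:ℝ)/16) := by
        rw [Finset.sum_const, Finset.card_univ, Fintype.card_fin, nsmul_eq_mul]; ring
    _ ≤ _ := Finset.sum_le_sum fun t _ => hdiag t

variable {n T : ℕ}

lemma twoWayJ_abs_row_sum (hn : 2 ≤ n) (hT : 2 ≤ T) (r : Fin T × Fin n) :
    (∑ v, |twoWayJ n T r v|) ≤ 4 := by
  obtain ⟨t, i⟩ := r
  rw [Fintype.sum_prod_type]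
  have h1 : ∀ s j, |twoWayJ n T (t, i) (s, j)|
      = |(if t = s then (1:ℝ) else 0) - (T:ℝ)⁻¹| * |(if i = j then (1:ℝ) else 0) - (n:ℝ)⁻¹| := by
    intro s j; rw [twoWayJ_apply, abs_mul]
  calc (∑ s, ∑ j, |twoWayJ n T (t, i) (s, j)|)
      = (∑ s, |(if t = s then (1:ℝ) else 0) - (T:ℝ)⁻¹|)
        * ∑ j, |(if i = j then (1:ℝ) else 0) - (n:ℝ)⁻¹| := by
        rw [Finset.sum_mul_sum]
        exact Finset.sum_congr rfl fun s _ => Finset.sum_congr rfl fun j _ => h1 s j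
    _ ≤ 2 * 2 := by
        refine mul_le_mul (eMat_abs_row_sum hT t) (eMat_abs_row_sum hn i)
          (Finset.sum_nonneg fun j _ => abs_nonneg _) (by norm_num)
    _ = 4 := by norm_num

lemma twoWayJ_symm_apply (r v : Fin T × Fin n) :
    twoWayJ n T r v = twoWayJ n T v r := by
  obtain ⟨t, i⟩ := r; obtain ⟨s, j⟩ := v
  rw [twoWayJ_apply, twoWayJ_apply]
  congr 2 <;> [skip; skip] <;> simp [eq_comm]

lemma twoWayJ_abs_col_sum (hn : 2 ≤ n) (hT : 2 ≤ T) (v : Fin T × Fin n) :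
    (∑ r, |twoWayJ n T r v|) ≤ 4 := by
  have : ∀ r, |twoWayJ n T r v| = |twoWayJ n T v r| := fun r => by rw [twoWayJ_symm_apply]
  rw [Finset.sum_congr rfl fun r _ => this r]
  exact twoWayJ_abs_row_sum hn hT v

lemma twoWayJ_sq_row_sum (hn : 2 ≤ n) (hT : 2 ≤ T) (r : Fin T × Fin n) :
    (∑ v, (twoWayJ n T r v) ^ 2) = twoWayJ n T r r := by
  obtain ⟨t, i⟩ := r
  rw [Fintype.sum_prod_type]
  have h1 : ∀ s j, (twoWayJ n T (t, i) (s, j)) ^ 2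
      = ((if t = s then (1:ℝ) else 0) - (T:ℝ)⁻¹) ^ 2
        * ((if i = j then (1:ℝ) else 0) - (n:ℝ)⁻¹) ^ 2 := by
    intro s j; rw [twoWayJ_apply, mul_pow]
  calc (∑ s, ∑ j, (twoWayJ n T (t, i) (s, j)) ^ 2)
      = (∑ s, ((if t = s then (1:ℝ) else 0) - (T:ℝ)⁻¹) ^ 2)
        * ∑ j, ((if i = j then (1:ℝ) else 0) - (n:ℝ)⁻¹) ^ 2 := by
        rw [Finset.sum_mul_sum]
        exact Finset.sum_congr rfl fun s _ => Finset.sum_congr rfl fun j _ => h1 s j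
    _ = (1 - (T:ℝ)⁻¹) * (1 - (n:ℝ)⁻¹) := by
        rw [eMat_sq_row_sum hT t, eMat_sq_row_sum hn i]
    _ = twoWayJ n T (t, i) (t, i) := by
        rw [twoWayJ_apply, if_pos rfl, if_pos rfl]

lemma twoWayJ_four_sum (hn : 2 ≤ n) (hT : 2 ≤ T) :
    ((n:ℝ) * (T:ℝ)) / 256 ≤ ∑ r, ∑ v, (twoWayJ n T r v) ^ 4 := by
  have h1 : ∀ (r v : Fin T × Fin n), (twoWayJ n T r v) ^ 4
      = ((if r.1 = v.1 then (1:ℝ) else 0) - (T:ℝ)⁻¹) ^ 4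
        * ((if r.2 = v.2 then (1:ℝ) else 0) - (n:ℝ)⁻¹) ^ 4 := by
    rintro ⟨t, i⟩ ⟨s, j⟩; rw [twoWayJ_apply, mul_pow]
  have h2 : (∑ r : Fin T × Fin n, ∑ v : Fin T × Fin n, (twoWayJ n T r v) ^ 4)
      = (∑ t : Fin T, ∑ s : Fin T, ((if t = s then (1:ℝ) else 0) - (T:ℝ)⁻¹) ^ 4)
        * ∑ i : Fin n, ∑ j : Fin n, ((if i = j then (1:ℝ) else 0) - (n:ℝ)⁻¹) ^ 4 := by
    rw [Fintype.sum_prod_type]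
    have hinner : ∀ (t : Fin T) (i : Fin n),
        (∑ v : Fin T × Fin n, (twoWayJ n T (t, i) v) ^ 4)
          = (∑ s : Fin T, ((if t = s then (1:ℝ) else 0) - (T:ℝ)⁻¹) ^ 4)
            * ∑ j : Fin n, ((if i = j then (1:ℝ) else 0) - (n:ℝ)⁻¹) ^ 4 := by
      intro t i
      rw [Fintype.sum_prod_type, Finset.sum_mul_sum]
      exact Finset.sum_congr rfl fun s _ => Finset.sum_congr rfl fun j _ => h1 (t, i) (s, j)
    rw [Finset.sum_congr rfl fun t _ => Finset.sum_congr rfl fun i _ => hinner t i]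
    exact (Finset.sum_mul_sum _ _ _ _).symm
  rw [h2]
  have hT16 := eMat_four_sum hT
  have hn16 := eMat_four_sum hn
  have hTnn : (0:ℝ) ≤ ∑ t : Fin T, ∑ s : Fin T, ((if t = s then (1:ℝ) else 0) - (T:ℝ)⁻¹) ^ 4 :=
    Finset.sum_nonneg fun t _ => Finset.sum_nonneg fun s _ => by positivity
  have hTpos : (0:ℝ) ≤ (T:ℝ)/16 := by positivity
  calc ((n:ℝ) * (T:ℝ)) / 256 = ((T:ℝ)/16) * ((n:ℝ)/16) := by ring
    _ ≤ (∑ t : Fin T, ∑ s : Fin T, ((if t = s then (1:ℝ) else 0) - (T:ℝ)⁻¹) ^ 4)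
        * ∑ i : Fin n, ∑ j : Fin n, ((if i = j then (1:ℝ) else 0) - (n:ℝ)⁻¹) ^ 4 :=
      mul_le_mul hT16 hn16 (by positivity) hTnn

end MatAux


section IndepAux
variable {Ω : Type*} [MeasureSpace Ω] [IsProbabilityMeasure (ℙ : Measure Ω)]
variable {ι : Type*} [Fintype ι] [DecidableEq ι] {X : ι → Ω → ℝ}

lemma abs_pow_le_one_add (x : ℝ) {k : ℕ} (hk : k ≤ 8) : |x ^ k| ≤ 1 + x ^ 8 := by
  have h8 : (0:ℝ) ≤ x ^ 8 := by positivity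
  rcases le_or_gt (|x|) 1 with h | h
  · have : |x ^ k| ≤ 1 := by rw [abs_pow]; exact pow_le_one₀ (abs_nonneg x) h
    linarith
  · have h1 : |x| ^ k ≤ |x| ^ 8 := pow_le_pow_right₀ h.le hk
    have h2 : |x| ^ 8 = x ^ 8 := by rw [pow_abs, abs_of_nonneg h8]
    rw [abs_pow]; linarith

lemma integrable_pow_le8 {f : Ω → ℝ} (hm : Measurable f)
    (h8 : Integrable (fun ω => f ω ^ 8)) {k : ℕ} (hk : k ≤ 8) :
    Integrable (fun ω => f ω ^ k) := by
  have hint : Integrable (fun ω => 1 + f ω ^ 8) := (integrable_const 1).add h8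
  refine hint.mono' ((hm.pow_const k).aestronglyMeasurable) (ae_of_all _ fun ω => ?_)
  simpa [Real.norm_eq_abs] using abs_pow_le_one_add (f ω) hk

lemma abs_integral_pow_le8 {f : Ω → ℝ} (hm : Measurable f)
    (h8 : Integrable (fun ω => f ω ^ 8)) {k : ℕ} (hk : k ≤ 8) :
    |∫ ω, f ω ^ k| ≤ 1 + ∫ ω, f ω ^ 8 := by
  have h1 : |∫ ω, f ω ^ k| ≤ ∫ ω, |f ω ^ k| := by
    simpa [Real.norm_eq_abs] using norm_integral_le_integral_norm (fun ω => f ω ^ k)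
  have h2 : ∫ ω, |f ω ^ k| ≤ ∫ ω, (1 + f ω ^ 8) := by
    refine integral_mono ((integrable_pow_le8 hm h8 hk).abs) ((integrable_const 1).add h8) ?_
    exact fun ω => abs_pow_le_one_add (f ω) hk
  have h3 : ∫ ω, (1 + f ω ^ 8) = 1 + ∫ ω, f ω ^ 8 := by
    rw [integral_add (integrable_const 1) h8, integral_const]; simp
  linarith

lemma indepFun_of_disjoint
    (hindep : iIndepFun (m := fun _ : ι => (inferInstance : MeasurableSpace ℝ)) X ℙ)
    (hmeas : ∀ i, Measurable (X i)) (S T : Finset ι) (hST : Disjoint S T)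
    (F : ({x // x ∈ S} → ℝ) → ℝ) (G : ({x // x ∈ T} → ℝ) → ℝ)
    (hF : Measurable F) (hG : Measurable G) :
    IndepFun (fun ω => F (fun i => X i ω)) (fun ω => G (fun i => X i ω)) ℙ :=
  (hindep.indepFun_finset S T hST hmeas).comp hF hG

lemma indepFun_prod_pow
    (hindep : iIndepFun (m := fun _ : ι => (inferInstance : MeasurableSpace ℝ)) X ℙ)
    (hmeas : ∀ i, Measurable (X i)) {w : ι} {s : Finset ι} (hw : w ∉ s) (p : ι → ℕ) (q : ℕ) :
    IndepFun (fun ω => X w ω ^ q) (fun ω => ∏ v ∈ s, X v ω ^ p v) ℙ := by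
  have h := indepFun_of_disjoint hindep hmeas {w} s (by simpa using hw)
    (fun y => (y ⟨w, Finset.mem_singleton_self w⟩) ^ q)
    (fun y => ∏ v : {x // x ∈ s}, (y v) ^ p v.1)
    (by fun_prop) (by fun_prop)
  convert h using 1
  funext ω
  rw [← Finset.prod_coe_sort s (fun v => X v ω ^ p v)]

lemma indepFun_monomials
    (hindep : iIndepFun (m := fun _ : ι => (inferInstance : MeasurableSpace ℝ)) X ℙ)
    (hmeas : ∀ i, Measurable (X i)) {k k' : ℕ} (g : Fin k → ι) (h : Fin k' → ι)
    (hdisj : Disjoint (Finset.univ.image g) (Finset.univ.image h)) :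
    IndepFun (fun ω => ∏ r, X (g r) ω) (fun ω => ∏ r, X (h r) ω) ℙ :=
  indepFun_of_disjoint hindep hmeas _ _ hdisj
    (fun y => ∏ r, y ⟨g r, Finset.mem_image_of_mem g (Finset.mem_univ r)⟩)
    (fun y => ∏ r, y ⟨h r, Finset.mem_image_of_mem h (Finset.mem_univ r)⟩)
    (by fun_prop) (by fun_prop)

/-- expectation of a product of powers over distinct indices factorizes -/
lemma integral_prod_pow
    (hindep : iIndepFun (m := fun _ : ι => (inferInstance : MeasurableSpace ℝ)) X ℙ)
    (hmeas : ∀ i, Measurable (X i)) (hint8 : ∀ i, Integrable (fun ω => X i ω ^ 8))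
    (p : ι → ℕ) (hp : ∀ v, p v ≤ 8) (s : Finset ι) :
    Integrable (fun ω => ∏ v ∈ s, X v ω ^ p v) ∧
      (∫ ω, ∏ v ∈ s, X v ω ^ p v) = ∏ v ∈ s, ∫ ω, X v ω ^ p v := by
  classical
  induction s using Finset.induction_on with
  | empty => simp
  | insert w s hw ih =>
    have hiw : Integrable (fun ω => X w ω ^ p w) := integrable_pow_le8 (hmeas w) (hint8 w) (hp w)
    have hind : IndepFun (fun ω => X w ω ^ p w) (fun ω => ∏ v ∈ s, X v ω ^ p v) ℙ :=
      indepFun_prod_pow hindep hmeas hw p (p w)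
    have hmul : Integrable (fun ω => X w ω ^ p w * ∏ v ∈ s, X v ω ^ p v) :=
      hind.integrable_mul hiw ih.1
    constructor
    · refine hmul.congr (ae_of_all _ fun ω => ?_)
      simp only []
      rw [Finset.prod_insert hw]
    · have := hind.integral_fun_mul_eq_mul_integral hiw.aestronglyMeasurable ih.1.aestronglyMeasurable
      calc (∫ ω, ∏ v ∈ insert w s, X v ω ^ p v)
          = ∫ ω, X w ω ^ p w * ∏ v ∈ s, X v ω ^ p v := by
            congr 1; funext ω; rw [Finset.prod_insert hw]
        _ = (∫ ω, X w ω ^ p w) * ∫ ω, ∏ v ∈ s, X v ω ^ p v := this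
        _ = ∏ v ∈ insert w s, ∫ ω, X v ω ^ p v := by rw [ih.2, Finset.prod_insert hw]


/-- a monomial indexed by `g : Fin k → ι` as a product of powers over distinct indices -/
lemma monomial_eq_prod_pow {k : ℕ} (g : Fin k → ι) (ω : Ω) :
    (∏ r, X (g r) ω) =
      ∏ v ∈ Finset.univ.image g,
        X v ω ^ (Finset.univ.filter (fun r => g r = v)).card := by
  rw [← Finset.prod_fiberwise_of_maps_to
    (fun r _ => Finset.mem_image_of_mem g (Finset.mem_univ r)) (fun r => X (g r) ω)]
  refine Finset.prod_congr rfl fun v hv => ?_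
  rw [Finset.prod_congr rfl (fun r hr => ?_), Finset.prod_const]
  rw [(Finset.mem_filter.mp hr).2]

lemma card_fiber_le {k : ℕ} (g : Fin k → ι) (v : ι) :
    (Finset.univ.filter (fun r => g r = v)).card ≤ k := by
  simpa using Finset.card_filter_le Finset.univ (fun r => g r = v)

lemma integrable_monomial
    (hindep : iIndepFun (m := fun _ : ι => (inferInstance : MeasurableSpace ℝ)) X ℙ)
    (hmeas : ∀ i, Measurable (X i)) (hint8 : ∀ i, Integrable (fun ω => X i ω ^ 8))
    {k : ℕ} (hk : k ≤ 8) (g : Fin k → ι) :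
    Integrable (fun ω => ∏ r, X (g r) ω) := by
  have h := (integral_prod_pow hindep hmeas hint8
    (fun v => (Finset.univ.filter (fun r => g r = v)).card)
    (fun v => le_trans (card_fiber_le g v) hk) (Finset.univ.image g)).1
  refine h.congr (ae_of_all _ fun ω => ?_)
  exact (monomial_eq_prod_pow g ω).symm

lemma abs_integral_monomial_le {μ8 : ℝ} (hμ8 : 0 ≤ μ8)
    (hindep : iIndepFun (m := fun _ : ι => (inferInstance : MeasurableSpace ℝ)) X ℙ)
    (hmeas : ∀ i, Measurable (X i)) (hint8 : ∀ i, Integrable (fun ω => X i ω ^ 8))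
    (hm8 : ∀ i, (∫ ω, X i ω ^ 8) = μ8)
    {k : ℕ} (hk : k ≤ 8) (g : Fin k → ι) :
    |∫ ω, ∏ r, X (g r) ω| ≤ (1 + μ8) ^ k := by
  set p : ι → ℕ := fun v => (Finset.univ.filter (fun r => g r = v)).card with hp
  have hple : ∀ v, p v ≤ 8 := fun v => le_trans (card_fiber_le g v) hk
  have h := (integral_prod_pow hindep hmeas hint8 p hple (Finset.univ.image g)).2
  have heq : (∫ ω, ∏ r, X (g r) ω) = ∏ v ∈ Finset.univ.image g, ∫ ω, X v ω ^ p v := by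
    rw [← h]; congr 1; funext ω; exact monomial_eq_prod_pow g ω
  rw [heq, Finset.abs_prod]
  have hbound : ∀ v ∈ Finset.univ.image g, |∫ ω, X v ω ^ p v| ≤ 1 + μ8 := by
    intro v _
    have := abs_integral_pow_le8 (hmeas v) (hint8 v) (hple v)
    rwa [hm8 v] at this
  calc (∏ v ∈ Finset.univ.image g, |∫ ω, X v ω ^ p v|)
      ≤ ∏ v ∈ Finset.univ.image g, (1 + μ8) :=
        Finset.prod_le_prod (fun v _ => abs_nonneg _) hbound
    _ = (1 + μ8) ^ (Finset.univ.image g).card := Finset.prod_const _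
    _ ≤ (1 + μ8) ^ k := by
        refine pow_le_pow_right₀ (by linarith) ?_
        calc (Finset.univ.image g).card ≤ (Finset.univ : Finset (Fin k)).card :=
              Finset.card_image_le
          _ = k := by simp

/-- product of two monomials is a monomial over `Fin (k + k')` -/
lemma monomial_mul_monomial {k k' : ℕ} (g : Fin k → ι) (h : Fin k' → ι) (ω : Ω) :
    (∏ r, X (g r) ω) * (∏ r, X (h r) ω) = ∏ r, X (Fin.append g h r) ω := by
  rw [Fin.prod_univ_add (f := fun r => X (Fin.append g h r) ω)]
  simp [Fin.append_left, Fin.append_right]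

/-- expansion of a power of a linear combination into monomials -/
lemma sum_pow_expand (a : ι → ℝ) (k : ℕ) (ω : Ω) :
    (∑ v, a v * X v ω) ^ k
      = ∑ g : Fin k → ι, (∏ r, a (g r)) * ∏ r, X (g r) ω := by
  rw [Finset.sum_pow' Finset.univ (fun v => a v * X v ω) k]
  rw [Fintype.piFinset_univ]
  refine Finset.sum_congr rfl fun g _ => ?_
  rw [← Finset.prod_mul_distrib]


lemma indepFun_sumpow_pow
    (hindep : iIndepFun (m := fun _ : ι => (inferInstance : MeasurableSpace ℝ)) X ℙ)
    (hmeas : ∀ i, Measurable (X i)) {w : ι} {s : Finset ι} (hw : w ∉ s) (a : ι → ℝ) (k q : ℕ) :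
    IndepFun (fun ω => (∑ v ∈ s, a v * X v ω) ^ k) (fun ω => X w ω ^ q) ℙ := by
  have h := indepFun_of_disjoint hindep hmeas s {w} (by simpa using hw)
    (fun y => (∑ v : {x // x ∈ s}, a v.1 * y v) ^ k)
    (fun y => (y ⟨w, Finset.mem_singleton_self w⟩) ^ q)
    (by fun_prop) (by fun_prop)
  convert h using 1
  funext ω
  rw [← Finset.sum_coe_sort s (fun v => a v * X v ω)]

lemma integrable_sum_pow
    (hindep : iIndepFun (m := fun _ : ι => (inferInstance : MeasurableSpace ℝ)) X ℙ)
    (hmeas : ∀ i, Measurable (X i)) (hint8 : ∀ i, Integrable (fun ω => X i ω ^ 8))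
    (s : Finset ι) (a : ι → ℝ) {k : ℕ} (hk : k ≤ 8) :
    Integrable (fun ω => (∑ v ∈ s, a v * X v ω) ^ k) := by
  have heq : (fun ω => (∑ v ∈ s, a v * X v ω) ^ k)
      = fun ω => ∑ g ∈ Fintype.piFinset (fun _ : Fin k => s),
          (∏ r, a (g r)) * ∏ r, X (g r) ω := by
    funext ω
    rw [Finset.sum_pow' s (fun v => a v * X v ω) k]
    exact Finset.sum_congr rfl fun g _ => Finset.prod_mul_distrib
  rw [heq]
  exact integrable_finset_sum _
    (fun g _ => (integrable_monomial hindep hmeas hint8 hk g).const_mul _)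

lemma integrable_base
    (hmeas : ∀ i, Measurable (X i)) (hint8 : ∀ i, Integrable (fun ω => X i ω ^ 8))
    (v : ι) : Integrable (X v) := by
  have := integrable_pow_le8 (hmeas v) (hint8 v) (show 1 ≤ 8 by norm_num)
  simpa [pow_one] using this

lemma integral_sum_zero
    (hmeas : ∀ i, Measurable (X i)) (hint8 : ∀ i, Integrable (fun ω => X i ω ^ 8))
    (hmean : ∀ i, (∫ ω, X i ω) = 0) (s : Finset ι) (a : ι → ℝ) :
    (∫ ω, ∑ v ∈ s, a v * X v ω) = 0 := by
  rw [integral_finset_sum s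
    (fun v _ => (integrable_base hmeas hint8 v).const_mul (a v))]
  simp [integral_const_mul, hmean]

variable {σ2 μ4 : ℝ}

lemma integral_sum_sq
    (hindep : iIndepFun (m := fun _ : ι => (inferInstance : MeasurableSpace ℝ)) X ℙ)
    (hmeas : ∀ i, Measurable (X i)) (hint8 : ∀ i, Integrable (fun ω => X i ω ^ 8))
    (hmean : ∀ i, (∫ ω, X i ω) = 0) (hvar : ∀ i, (∫ ω, X i ω ^ 2) = σ2)
    (s : Finset ι) (a : ι → ℝ) :
    (∫ ω, (∑ v ∈ s, a v * X v ω) ^ 2) = σ2 * ∑ v ∈ s, a v ^ 2 := by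
  classical
  induction s using Finset.induction_on with
  | empty => simp
  | insert w s hw ih =>
    have iS : Integrable (fun ω => ∑ v ∈ s, a v * X v ω) := by
      have := integrable_sum_pow hindep hmeas hint8 s a (k := 1) (by norm_num)
      simpa [pow_one] using this
    have iS2 : Integrable (fun ω => (∑ v ∈ s, a v * X v ω) ^ 2) :=
      integrable_sum_pow hindep hmeas hint8 s a (by norm_num)
    have iX : Integrable (X w) := integrable_base hmeas hint8 w
    have iX2 : Integrable (fun ω => X w ω ^ 2) :=
      integrable_pow_le8 (hmeas w) (hint8 w) (by norm_num)
    have hindSX : IndepFun (fun ω => ∑ v ∈ s, a v * X v ω) (X w) ℙ := by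
      have := indepFun_sumpow_pow hindep hmeas hw a 1 1
      simpa [pow_one] using this
    have iSX : Integrable (fun ω => (∑ v ∈ s, a v * X v ω) * X w ω) :=
      hindSX.integrable_mul iS iX
    have hSX : (∫ ω, (∑ v ∈ s, a v * X v ω) * X w ω) = 0 := by
      rw [show (∫ ω, (∑ v ∈ s, a v * X v ω) * X w ω)
            = (∫ ω, ∑ v ∈ s, a v * X v ω) * ∫ ω, X w ω
          from hindSX.integral_fun_mul_eq_mul_integral iS.aestronglyMeasurable iX.aestronglyMeasurable,
        integral_sum_zero hmeas hint8 hmean, zero_mul]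
    have iB : Integrable (fun ω => (2 * a w) * ((∑ v ∈ s, a v * X v ω) * X w ω)) :=
      iSX.const_mul _
    have iC : Integrable (fun ω => (a w) ^ 2 * (X w ω ^ 2)) := iX2.const_mul _
    calc (∫ ω, (∑ v ∈ insert w s, a v * X v ω) ^ 2)
        = ∫ ω, ((∑ v ∈ s, a v * X v ω) ^ 2
            + ((2 * a w) * ((∑ v ∈ s, a v * X v ω) * X w ω)
              + (a w) ^ 2 * (X w ω ^ 2))) := by
          congr 1; funext ω; rw [Finset.sum_insert hw]; ring
      _ = (∫ ω, (∑ v ∈ s, a v * X v ω) ^ 2)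
            + ((2 * a w) * (∫ ω, (∑ v ∈ s, a v * X v ω) * X w ω)
              + (a w) ^ 2 * (∫ ω, X w ω ^ 2)) := by
          have e2 : (∫ ω, ((∑ v ∈ s, a v * X v ω) ^ 2
              + ((2 * a w) * ((∑ v ∈ s, a v * X v ω) * X w ω) + (a w) ^ 2 * (X w ω ^ 2))))
              = (∫ ω, (∑ v ∈ s, a v * X v ω) ^ 2)
                + ∫ ω, ((2 * a w) * ((∑ v ∈ s, a v * X v ω) * X w ω)
                  + (a w) ^ 2 * (X w ω ^ 2)) :=
            integral_add iS2 (iB.add iC)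
          rw [e2, integral_add iB iC, integral_const_mul, integral_const_mul]
      _ = σ2 * ∑ v ∈ insert w s, a v ^ 2 := by
          rw [ih, hSX, hvar, Finset.sum_insert hw]; ring

lemma integral_sum_four
    (hindep : iIndepFun (m := fun _ : ι => (inferInstance : MeasurableSpace ℝ)) X ℙ)
    (hmeas : ∀ i, Measurable (X i)) (hint8 : ∀ i, Integrable (fun ω => X i ω ^ 8))
    (hmean : ∀ i, (∫ ω, X i ω) = 0) (hvar : ∀ i, (∫ ω, X i ω ^ 2) = σ2)
    (hm4 : ∀ i, (∫ ω, X i ω ^ 4) = μ4)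
    (s : Finset ι) (a : ι → ℝ) :
    (∫ ω, (∑ v ∈ s, a v * X v ω) ^ 4)
      = μ4 * ∑ v ∈ s, a v ^ 4
        + 3 * σ2 ^ 2 * ((∑ v ∈ s, a v ^ 2) ^ 2 - ∑ v ∈ s, a v ^ 4) := by
  classical
  induction s using Finset.induction_on with
  | empty => simp
  | insert w s hw ih =>
    have iSk : ∀ k : ℕ, k ≤ 8 → Integrable (fun ω => (∑ v ∈ s, a v * X v ω) ^ k) :=
      fun k hk => integrable_sum_pow hindep hmeas hint8 s a hk
    have iXk : ∀ k : ℕ, k ≤ 8 → Integrable (fun ω => X w ω ^ k) :=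
      fun k hk => integrable_pow_le8 (hmeas w) (hint8 w) hk
    have hindk : ∀ k q : ℕ,
        IndepFun (fun ω => (∑ v ∈ s, a v * X v ω) ^ k) (fun ω => X w ω ^ q) ℙ :=
      fun k q => indepFun_sumpow_pow hindep hmeas hw a k q
    have iKQ : ∀ k q : ℕ, k ≤ 8 → q ≤ 8 →
        Integrable (fun ω => (∑ v ∈ s, a v * X v ω) ^ k * X w ω ^ q) :=
      fun k q hk hq => (hindk k q).integrable_mul (iSk k hk) (iXk q hq)
    have hKQ : ∀ k q : ℕ, k ≤ 8 → q ≤ 8 →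
        (∫ ω, (∑ v ∈ s, a v * X v ω) ^ k * X w ω ^ q)
          = (∫ ω, (∑ v ∈ s, a v * X v ω) ^ k) * ∫ ω, X w ω ^ q := by
      intro k q hk hq
      exact (hindk k q).integral_fun_mul_eq_mul_integral (iSk k hk).aestronglyMeasurable (iXk q hq).aestronglyMeasurable
    have hS1 : (∫ ω, (∑ v ∈ s, a v * X v ω) ^ 1) = 0 := by
      simp only [pow_one]; exact integral_sum_zero hmeas hint8 hmean s a
    have hX1 : (∫ ω, X w ω ^ 1) = 0 := by simp only [pow_one]; exact hmean w
    calc (∫ ω, (∑ v ∈ insert w s, a v * X v ω) ^ 4)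
        = ∫ ω, ((∑ v ∈ s, a v * X v ω) ^ 4
            + ((4 * a w) * ((∑ v ∈ s, a v * X v ω) ^ 3 * X w ω ^ 1)
            + ((6 * a w ^ 2) * ((∑ v ∈ s, a v * X v ω) ^ 2 * X w ω ^ 2)
            + ((4 * a w ^ 3) * ((∑ v ∈ s, a v * X v ω) ^ 1 * X w ω ^ 3)
            + (a w) ^ 4 * (X w ω ^ 4))))) := by
          congr 1; funext ω; rw [Finset.sum_insert hw]; ring
      _ = (∫ ω, (∑ v ∈ s, a v * X v ω) ^ 4)
            + ((4 * a w) * (∫ ω, (∑ v ∈ s, a v * X v ω) ^ 3 * X w ω ^ 1)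
            + ((6 * a w ^ 2) * (∫ ω, (∑ v ∈ s, a v * X v ω) ^ 2 * X w ω ^ 2)
            + ((4 * a w ^ 3) * (∫ ω, (∑ v ∈ s, a v * X v ω) ^ 1 * X w ω ^ 3)
            + (a w) ^ 4 * (∫ ω, X w ω ^ 4)))) := by
          have i1 := iSk 4 (by norm_num)
          have i2 := (iKQ 3 1 (by norm_num) (by norm_num)).const_mul (4 * a w)
          have i3 := (iKQ 2 2 (by norm_num) (by norm_num)).const_mul (6 * a w ^ 2)
          have i4 := (iKQ 1 3 (by norm_num) (by norm_num)).const_mul (4 * a w ^ 3)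
          have i5 := (iXk 4 (by norm_num)).const_mul ((a w) ^ 4)
          have e4 : (∫ ω, ((4 * a w ^ 3) * ((∑ v ∈ s, a v * X v ω) ^ 1 * X w ω ^ 3)
                + (a w) ^ 4 * (X w ω ^ 4)))
              = (∫ ω, (4 * a w ^ 3) * ((∑ v ∈ s, a v * X v ω) ^ 1 * X w ω ^ 3))
                + ∫ ω, (a w) ^ 4 * (X w ω ^ 4) := integral_add i4 i5
          have e3 : (∫ ω, ((6 * a w ^ 2) * ((∑ v ∈ s, a v * X v ω) ^ 2 * X w ω ^ 2)
                + ((4 * a w ^ 3) * ((∑ v ∈ s, a v * X v ω) ^ 1 * X w ω ^ 3)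
                  + (a w) ^ 4 * (X w ω ^ 4))))
              = (∫ ω, (6 * a w ^ 2) * ((∑ v ∈ s, a v * X v ω) ^ 2 * X w ω ^ 2))
                + ∫ ω, ((4 * a w ^ 3) * ((∑ v ∈ s, a v * X v ω) ^ 1 * X w ω ^ 3)
                  + (a w) ^ 4 * (X w ω ^ 4)) := integral_add i3 (i4.add i5)
          have e2 : (∫ ω, ((4 * a w) * ((∑ v ∈ s, a v * X v ω) ^ 3 * X w ω ^ 1)
                + ((6 * a w ^ 2) * ((∑ v ∈ s, a v * X v ω) ^ 2 * X w ω ^ 2)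
                + ((4 * a w ^ 3) * ((∑ v ∈ s, a v * X v ω) ^ 1 * X w ω ^ 3)
                  + (a w) ^ 4 * (X w ω ^ 4)))))
              = (∫ ω, (4 * a w) * ((∑ v ∈ s, a v * X v ω) ^ 3 * X w ω ^ 1))
                + ∫ ω, ((6 * a w ^ 2) * ((∑ v ∈ s, a v * X v ω) ^ 2 * X w ω ^ 2)
                + ((4 * a w ^ 3) * ((∑ v ∈ s, a v * X v ω) ^ 1 * X w ω ^ 3)
                  + (a w) ^ 4 * (X w ω ^ 4))) := integral_add i2 (i3.add (i4.add i5))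
          have e1 : (∫ ω, ((∑ v ∈ s, a v * X v ω) ^ 4
                + ((4 * a w) * ((∑ v ∈ s, a v * X v ω) ^ 3 * X w ω ^ 1)
                + ((6 * a w ^ 2) * ((∑ v ∈ s, a v * X v ω) ^ 2 * X w ω ^ 2)
                + ((4 * a w ^ 3) * ((∑ v ∈ s, a v * X v ω) ^ 1 * X w ω ^ 3)
                  + (a w) ^ 4 * (X w ω ^ 4))))))
              = (∫ ω, (∑ v ∈ s, a v * X v ω) ^ 4)
                + ∫ ω, ((4 * a w) * ((∑ v ∈ s, a v * X v ω) ^ 3 * X w ω ^ 1)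
                + ((6 * a w ^ 2) * ((∑ v ∈ s, a v * X v ω) ^ 2 * X w ω ^ 2)
                + ((4 * a w ^ 3) * ((∑ v ∈ s, a v * X v ω) ^ 1 * X w ω ^ 3)
                  + (a w) ^ 4 * (X w ω ^ 4)))) := integral_add i1 (i2.add (i3.add (i4.add i5)))
          rw [e1, e2, e3, e4, integral_const_mul, integral_const_mul, integral_const_mul,
            integral_const_mul]
      _ = μ4 * ∑ v ∈ insert w s, a v ^ 4
            + 3 * σ2 ^ 2 * ((∑ v ∈ insert w s, a v ^ 2) ^ 2 - ∑ v ∈ insert w s, a v ^ 4) := by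
          rw [hKQ 3 1 (by norm_num) (by norm_num), hKQ 2 2 (by norm_num) (by norm_num),
            hKQ 1 3 (by norm_num) (by norm_num), hS1, hX1, ih, hm4, hvar,
            integral_sum_sq hindep hmeas hint8 hmean hvar s a,
            Finset.sum_insert hw, Finset.sum_insert hw]
          ring


lemma sum_monomial_coord {k : ℕ} (f c : ι → ℝ) (r : Fin k) :
    (∑ g : Fin k → ι, (∏ s, f (g s)) * c (g r))
      = (∑ v, f v * c v) * (∑ v, f v) ^ (k - 1) := by
  classical
  set h : Fin k → ι → ℝ := fun s w => if s = r then f w * c w else f w with hh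
  have h1 : ∀ g : Fin k → ι, (∏ s, h s (g s)) = (∏ s, f (g s)) * c (g r) := by
    intro g
    rw [← Finset.mul_prod_erase Finset.univ (fun s => h s (g s)) (Finset.mem_univ r),
      ← Finset.mul_prod_erase Finset.univ (fun s => f (g s)) (Finset.mem_univ r)]
    have h2 : ∀ s ∈ Finset.univ.erase r, h s (g s) = f (g s) := fun s hs =>
      if_neg (Finset.mem_erase.mp hs).1
    rw [Finset.prod_congr rfl h2]
    have h3 : h r (g r) = f (g r) * c (g r) := if_pos rfl
    rw [h3]; ring
  have h4 : (∑ g : Fin k → ι, (∏ s, f (g s)) * c (g r))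
      = ∑ g : Fin k → ι, ∏ s, h s (g s) :=
    Finset.sum_congr rfl fun g _ => (h1 g).symm
  rw [h4, ← Fintype.prod_sum (fun s w => h s w)]
  rw [← Finset.mul_prod_erase Finset.univ (fun s => ∑ w, h s w) (Finset.mem_univ r)]
  have h5 : (∑ w, h r w) = ∑ v, f v * c v := by
    refine Finset.sum_congr rfl fun w _ => if_pos rfl
  have h6 : ∀ s ∈ Finset.univ.erase r, (∑ w, h s w) = ∑ v, f v := fun s hs =>
    Finset.sum_congr rfl fun w _ => if_neg (Finset.mem_erase.mp hs).1
  rw [Finset.prod_congr rfl h6, Finset.prod_const, h5, Finset.card_erase_of_mem (Finset.mem_univ r)]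
  congr 2
  simp

lemma sum_swap4 {M : Type*} [AddCommMonoid M] (F : (Fin 4 → ι) → (Fin 4 → ι) → Fin 4 → Fin 4 → M) :
    (∑ g : Fin 4 → ι, ∑ h : Fin 4 → ι, ∑ r : Fin 4, ∑ r' : Fin 4, F g h r r')
      = ∑ r : Fin 4, ∑ r' : Fin 4, ∑ g : Fin 4 → ι, ∑ h : Fin 4 → ι, F g h r r' :=
  calc (∑ g : Fin 4 → ι, ∑ h : Fin 4 → ι, ∑ r : Fin 4, ∑ r' : Fin 4, F g h r r')
      = ∑ g : Fin 4 → ι, ∑ r : Fin 4, ∑ h : Fin 4 → ι, ∑ r' : Fin 4, F g h r r' :=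
        Finset.sum_congr rfl fun g _ => Finset.sum_comm
    _ = ∑ r : Fin 4, ∑ g : Fin 4 → ι, ∑ h : Fin 4 → ι, ∑ r' : Fin 4, F g h r r' :=
        Finset.sum_comm
    _ = ∑ r : Fin 4, ∑ g : Fin 4 → ι, ∑ r' : Fin 4, ∑ h : Fin 4 → ι, F g h r r' :=
        Finset.sum_congr rfl fun r _ => Finset.sum_congr rfl fun g _ => Finset.sum_comm
    _ = ∑ r : Fin 4, ∑ r' : Fin 4, ∑ g : Fin 4 → ι, ∑ h : Fin 4 → ι, F g h r r' :=
        Finset.sum_congr rfl fun r _ => Finset.sum_comm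


variable {μ8 : ℝ}

lemma integrable_monomial_mul
    (hindep : iIndepFun (m := fun _ : ι => (inferInstance : MeasurableSpace ℝ)) X ℙ)
    (hmeas : ∀ i, Measurable (X i)) (hint8 : ∀ i, Integrable (fun ω => X i ω ^ 8))
    (g h : Fin 4 → ι) :
    Integrable (fun ω => (∏ r, X (g r) ω) * (∏ r, X (h r) ω)) := by
  have := integrable_monomial hindep hmeas hint8 (k := 4 + 4) (by norm_num) (Fin.append g h)
  refine this.congr (ae_of_all _ fun ω => ?_)
  exact (monomial_mul_monomial g h ω).symm

lemma abs_integral_monomial_mul_le (hμ8 : 0 ≤ μ8)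
    (hindep : iIndepFun (m := fun _ : ι => (inferInstance : MeasurableSpace ℝ)) X ℙ)
    (hmeas : ∀ i, Measurable (X i)) (hint8 : ∀ i, Integrable (fun ω => X i ω ^ 8))
    (hm8 : ∀ i, (∫ ω, X i ω ^ 8) = μ8) (g h : Fin 4 → ι) :
    |∫ ω, (∏ r, X (g r) ω) * (∏ r, X (h r) ω)| ≤ (1 + μ8) ^ 8 := by
  have heq : (∫ ω, (∏ r, X (g r) ω) * (∏ r, X (h r) ω))
      = ∫ ω, ∏ r : Fin (4 + 4), X (Fin.append g h r) ω := by
    congr 1; funext ω; exact monomial_mul_monomial g h ω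
  rw [heq]
  exact abs_integral_monomial_le hμ8 hindep hmeas hint8 hm8 (by norm_num) (Fin.append g h)

/-- expansion of `E[(∑ a X)⁴]` into monomials -/
lemma integral_fourpow_expand
    (hindep : iIndepFun (m := fun _ : ι => (inferInstance : MeasurableSpace ℝ)) X ℙ)
    (hmeas : ∀ i, Measurable (X i)) (hint8 : ∀ i, Integrable (fun ω => X i ω ^ 8))
    (a : ι → ℝ) :
    (∫ ω, (∑ v, a v * X v ω) ^ 4)
      = ∑ g : Fin 4 → ι, (∏ r, a (g r)) * ∫ ω, ∏ r, X (g r) ω := by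
  have heq : (fun ω => (∑ v, a v * X v ω) ^ 4)
      = fun ω => ∑ g : Fin 4 → ι, (∏ r, a (g r)) * ∏ r, X (g r) ω := by
    funext ω; exact sum_pow_expand a 4 ω
  rw [heq, integral_finset_sum _ (fun g _ =>
    (integrable_monomial hindep hmeas hint8 (by norm_num) g).const_mul _)]
  exact Finset.sum_congr rfl fun g _ => integral_const_mul _ _

/-- expansion of `E[(∑ a X)⁴ (∑ b X)⁴]` into monomials -/
lemma integral_fourpow_mul_expand
    (hindep : iIndepFun (m := fun _ : ι => (inferInstance : MeasurableSpace ℝ)) X ℙ)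
    (hmeas : ∀ i, Measurable (X i)) (hint8 : ∀ i, Integrable (fun ω => X i ω ^ 8))
    (a b : ι → ℝ) :
    (∫ ω, (∑ v, a v * X v ω) ^ 4 * (∑ v, b v * X v ω) ^ 4)
      = ∑ g : Fin 4 → ι, ∑ h : Fin 4 → ι,
          ((∏ r, a (g r)) * (∏ r, b (h r)))
            * ∫ ω, (∏ r, X (g r) ω) * (∏ r, X (h r) ω) := by
  have heq : (fun ω => (∑ v, a v * X v ω) ^ 4 * (∑ v, b v * X v ω) ^ 4)
      = fun ω => ∑ g : Fin 4 → ι, ∑ h : Fin 4 → ι,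
          ((∏ r, a (g r)) * (∏ r, b (h r)))
            * ((∏ r, X (g r) ω) * (∏ r, X (h r) ω)) := by
    funext ω
    rw [sum_pow_expand a 4 ω, sum_pow_expand b 4 ω, Finset.sum_mul_sum]
    exact Finset.sum_congr rfl fun g _ => Finset.sum_congr rfl fun h _ => by ring
  rw [heq, integral_finset_sum _ (fun g _ => integrable_finset_sum _ (fun h _ =>
    (integrable_monomial_mul hindep hmeas hint8 g h).const_mul _))]
  refine Finset.sum_congr rfl fun g _ => ?_
  rw [integral_finset_sum _ (fun h _ =>
    (integrable_monomial_mul hindep hmeas hint8 g h).const_mul _)]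
  exact Finset.sum_congr rfl fun h _ => integral_const_mul _ _

lemma integrable_fourpow_mul
    (hindep : iIndepFun (m := fun _ : ι => (inferInstance : MeasurableSpace ℝ)) X ℙ)
    (hmeas : ∀ i, Measurable (X i)) (hint8 : ∀ i, Integrable (fun ω => X i ω ^ 8))
    (a b : ι → ℝ) :
    Integrable (fun ω => (∑ v, a v * X v ω) ^ 4 * (∑ v, b v * X v ω) ^ 4) := by
  have heq : (fun ω => (∑ v, a v * X v ω) ^ 4 * (∑ v, b v * X v ω) ^ 4)
      = fun ω => ∑ g : Fin 4 → ι, ∑ h : Fin 4 → ι,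
          ((∏ r, a (g r)) * (∏ r, b (h r)))
            * ((∏ r, X (g r) ω) * (∏ r, X (h r) ω)) := by
    funext ω
    rw [sum_pow_expand a 4 ω, sum_pow_expand b 4 ω, Finset.sum_mul_sum]
    exact Finset.sum_congr rfl fun g _ => Finset.sum_congr rfl fun h _ => by ring
  rw [heq]
  exact integrable_finset_sum _ (fun g _ => integrable_finset_sum _ (fun h _ =>
    (integrable_monomial_mul hindep hmeas hint8 g h).const_mul _))

/-- covariance term bound -/
lemma cov_term_bound (hμ8 : 0 ≤ μ8)
    (hindep : iIndepFun (m := fun _ : ι => (inferInstance : MeasurableSpace ℝ)) X ℙ)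
    (hmeas : ∀ i, Measurable (X i)) (hint8 : ∀ i, Integrable (fun ω => X i ω ^ 8))
    (hm8 : ∀ i, (∫ ω, X i ω ^ 8) = μ8) (a b : ι → ℝ) (g h : Fin 4 → ι) :
    |((∏ r, a (g r)) * (∏ r, b (h r)))
        * ((∫ ω, (∏ r, X (g r) ω) * (∏ r, X (h r) ω))
          - (∫ ω, ∏ r, X (g r) ω) * (∫ ω, ∏ r, X (h r) ω))|
      ≤ 2 * (1 + μ8) ^ 8 * ∑ r : Fin 4, ∑ r' : Fin 4,
          (if g r = h r' then (∏ t, |a (g t)|) * (∏ t, |b (h t)|) else 0) := by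
  have hB1 : (1:ℝ) ≤ 1 + μ8 := by linarith
  have hB0 : (0:ℝ) ≤ 1 + μ8 := by linarith
  by_cases hex : ∃ r r', g r = h r'
  · obtain ⟨r0, r0', he⟩ := hex
    have hd1 : |∫ ω, (∏ r, X (g r) ω) * (∏ r, X (h r) ω)| ≤ (1 + μ8) ^ 8 :=
      abs_integral_monomial_mul_le hμ8 hindep hmeas hint8 hm8 g h
    have hd2 : |∫ ω, ∏ r, X (g r) ω| ≤ (1 + μ8) ^ 4 :=
      abs_integral_monomial_le hμ8 hindep hmeas hint8 hm8 (by norm_num) g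
    have hd3 : |∫ ω, ∏ r, X (h r) ω| ≤ (1 + μ8) ^ 4 :=
      abs_integral_monomial_le hμ8 hindep hmeas hint8 hm8 (by norm_num) h
    have hD : |(∫ ω, (∏ r, X (g r) ω) * (∏ r, X (h r) ω))
          - (∫ ω, ∏ r, X (g r) ω) * (∫ ω, ∏ r, X (h r) ω)| ≤ 2 * (1 + μ8) ^ 8 := by
      have habs : |(∫ ω, ∏ r, X (g r) ω) * (∫ ω, ∏ r, X (h r) ω)| ≤ (1 + μ8) ^ 8 := by
        rw [abs_mul]
        calc |∫ ω, ∏ r, X (g r) ω| * |∫ ω, ∏ r, X (h r) ω|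
            ≤ (1 + μ8) ^ 4 * (1 + μ8) ^ 4 :=
              mul_le_mul hd2 hd3 (abs_nonneg _) (by positivity)
          _ = (1 + μ8) ^ 8 := by ring
      calc |(∫ ω, (∏ r, X (g r) ω) * (∏ r, X (h r) ω))
            - (∫ ω, ∏ r, X (g r) ω) * (∫ ω, ∏ r, X (h r) ω)|
          ≤ |∫ ω, (∏ r, X (g r) ω) * (∏ r, X (h r) ω)|
            + |(∫ ω, ∏ r, X (g r) ω) * (∫ ω, ∏ r, X (h r) ω)| := abs_sub _ _
        _ ≤ 2 * (1 + μ8) ^ 8 := by linarith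
    have hterm : (∏ t, |a (g t)|) * (∏ t, |b (h t)|)
        ≤ ∑ r : Fin 4, ∑ r' : Fin 4,
            (if g r = h r' then (∏ t, |a (g t)|) * (∏ t, |b (h t)|) else 0) := by
      have hnn : ∀ r ∈ (Finset.univ : Finset (Fin 4)), (0:ℝ) ≤ ∑ r' : Fin 4,
          (if g r = h r' then (∏ t, |a (g t)|) * (∏ t, |b (h t)|) else 0) := by
        intro r _
        refine Finset.sum_nonneg fun r' _ => ?_
        split <;> positivity
      have hinner : (∏ t, |a (g t)|) * (∏ t, |b (h t)|)
          ≤ ∑ r' : Fin 4, (if g r0 = h r' then (∏ t, |a (g t)|) * (∏ t, |b (h t)|) else 0) := by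
        have h9 := Finset.single_le_sum (f := fun r' : Fin 4 =>
          (if g r0 = h r' then (∏ t, |a (g t)|) * (∏ t, |b (h t)|) else 0))
          (fun r' _ => by split <;> positivity) (Finset.mem_univ r0')
        rwa [if_pos he] at h9
      calc (∏ t, |a (g t)|) * (∏ t, |b (h t)|)
          ≤ ∑ r' : Fin 4, (if g r0 = h r' then (∏ t, |a (g t)|) * (∏ t, |b (h t)|) else 0) :=
            hinner
        _ ≤ ∑ r : Fin 4, ∑ r' : Fin 4,
            (if g r = h r' then (∏ t, |a (g t)|) * (∏ t, |b (h t)|) else 0) :=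
            Finset.single_le_sum hnn (Finset.mem_univ r0)
    calc |((∏ r, a (g r)) * (∏ r, b (h r)))
        * ((∫ ω, (∏ r, X (g r) ω) * (∏ r, X (h r) ω))
          - (∫ ω, ∏ r, X (g r) ω) * (∫ ω, ∏ r, X (h r) ω))|
        = ((∏ t, |a (g t)|) * (∏ t, |b (h t)|))
          * |(∫ ω, (∏ r, X (g r) ω) * (∏ r, X (h r) ω))
            - (∫ ω, ∏ r, X (g r) ω) * (∫ ω, ∏ r, X (h r) ω)| := by
          rw [abs_mul, abs_mul, Finset.abs_prod, Finset.abs_prod]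
      _ ≤ ((∏ t, |a (g t)|) * (∏ t, |b (h t)|)) * (2 * (1 + μ8) ^ 8) := by
          refine mul_le_mul_of_nonneg_left hD (by positivity)
      _ ≤ (2 * (1 + μ8) ^ 8) * ∑ r : Fin 4, ∑ r' : Fin 4,
            (if g r = h r' then (∏ t, |a (g t)|) * (∏ t, |b (h t)|) else 0) := by
          rw [mul_comm]
          refine mul_le_mul_of_nonneg_left hterm (by positivity)
  · push_neg at hex
    have hdisj : Disjoint (Finset.univ.image g) (Finset.univ.image h) := by
      rw [Finset.disjoint_left]
      rintro v hv hv'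
      obtain ⟨r, _, rfl⟩ := Finset.mem_image.mp hv
      obtain ⟨r', _, he⟩ := Finset.mem_image.mp hv'
      exact hex r r' he.symm
    have hzero : (∫ ω, (∏ r, X (g r) ω) * (∏ r, X (h r) ω))
        = (∫ ω, ∏ r, X (g r) ω) * (∫ ω, ∏ r, X (h r) ω) :=
      (indepFun_monomials hindep hmeas g h hdisj).integral_fun_mul_eq_mul_integral
        (integrable_monomial hindep hmeas hint8 (by norm_num) g).aestronglyMeasurable
        (integrable_monomial hindep hmeas hint8 (by norm_num) h).aestronglyMeasurable
    have hrhs : (∑ r : Fin 4, ∑ r' : Fin 4,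
        (if g r = h r' then (∏ t, |a (g t)|) * (∏ t, |b (h t)|) else 0)) = 0 :=
      Finset.sum_eq_zero fun r _ => Finset.sum_eq_zero fun r' _ => if_neg (hex r r')
    rw [hzero, hrhs, sub_self, mul_zero, abs_zero, mul_zero]


lemma inner_double_sum_eval (a b : ι → ℝ) (r r' : Fin 4) :
    (∑ g : Fin 4 → ι, ∑ h : Fin 4 → ι,
        (if g r = h r' then (∏ t, |a (g t)|) * (∏ t, |b (h t)|) else 0))
      = (∑ v, |a v| * |b v|) * ((∑ v, |a v|) ^ 3 * (∑ v, |b v|) ^ 3) := by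
  classical
  have hinner : ∀ g : Fin 4 → ι,
      (∑ h : Fin 4 → ι, (if g r = h r' then (∏ t, |a (g t)|) * (∏ t, |b (h t)|) else 0))
        = (∏ t, |a (g t)|) * (|b (g r)| * (∑ v, |b v|) ^ 3) := by
    intro g
    have e1 : ∀ h : Fin 4 → ι,
        (if g r = h r' then (∏ t, |a (g t)|) * (∏ t, |b (h t)|) else 0)
          = (∏ t, |a (g t)|) * ((∏ t, |b (h t)|)
              * (if h r' = g r then (1:ℝ) else 0)) := by
      intro h
      by_cases hc : g r = h r'
      · rw [if_pos hc, if_pos hc.symm]; ring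
      · rw [if_neg hc, if_neg (fun hcc => hc hcc.symm)]; ring
    rw [Finset.sum_congr rfl fun h _ => e1 h, ← Finset.mul_sum]
    congr 1
    have e2 : ∀ h : Fin 4 → ι,
        (∏ t, |b (h t)|) * (if h r' = g r then (1:ℝ) else 0)
          = (∏ t, |b (h t)|) * (fun w => if w = g r then (1:ℝ) else 0) (h r') :=
      fun h => rfl
    rw [Finset.sum_congr rfl fun h _ => e2 h,
      sum_monomial_coord (fun v => |b v|) (fun w => if w = g r then (1:ℝ) else 0) r']
    have e3 : (∑ v, |b v| * (if v = g r then (1:ℝ) else 0)) = |b (g r)| := by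
      rw [Finset.sum_congr rfl (fun v _ => by
        rw [show |b v| * (if v = g r then (1:ℝ) else 0)
            = (if v = g r then |b v| else 0) by split <;> ring])]
      rw [Finset.sum_ite_eq' Finset.univ (g r) (fun v => |b v|)]
      simp
    rw [e3]
  rw [Finset.sum_congr rfl fun g _ => hinner g]
  have e4 : ∀ g : Fin 4 → ι,
      (∏ t, |a (g t)|) * (|b (g r)| * (∑ v, |b v|) ^ 3)
        = ((∏ t, |a (g t)|) * (fun w => |b w|) (g r)) * (∑ v, |b v|) ^ 3 := by
    intro g; dsimp only; ring
  rw [Finset.sum_congr rfl fun g _ => e4 g, ← Finset.sum_mul,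
    sum_monomial_coord (fun v => |a v|) (fun w => |b w|) r]
  norm_num
  ring

/-- The main covariance bound. -/
lemma cov_bound (hμ8 : 0 ≤ μ8)
    (hindep : iIndepFun (m := fun _ : ι => (inferInstance : MeasurableSpace ℝ)) X ℙ)
    (hmeas : ∀ i, Measurable (X i)) (hint8 : ∀ i, Integrable (fun ω => X i ω ^ 8))
    (hm8 : ∀ i, (∫ ω, X i ω ^ 8) = μ8) (a b : ι → ℝ) :
    |(∫ ω, (∑ v, a v * X v ω) ^ 4 * (∑ v, b v * X v ω) ^ 4)
        - (∫ ω, (∑ v, a v * X v ω) ^ 4) * (∫ ω, (∑ v, b v * X v ω) ^ 4)|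
      ≤ 32 * (1 + μ8) ^ 8
          * ((∑ v, |a v| * |b v|) * ((∑ v, |a v|) ^ 3 * (∑ v, |b v|) ^ 3)) := by
  have hexp : (∫ ω, (∑ v, a v * X v ω) ^ 4 * (∑ v, b v * X v ω) ^ 4)
        - (∫ ω, (∑ v, a v * X v ω) ^ 4) * (∫ ω, (∑ v, b v * X v ω) ^ 4)
      = ∑ g : Fin 4 → ι, ∑ h : Fin 4 → ι,
          ((∏ r, a (g r)) * (∏ r, b (h r)))
            * ((∫ ω, (∏ r, X (g r) ω) * (∏ r, X (h r) ω))
              - (∫ ω, ∏ r, X (g r) ω) * (∫ ω, ∏ r, X (h r) ω)) := by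
    rw [integral_fourpow_mul_expand hindep hmeas hint8 a b,
      integral_fourpow_expand hindep hmeas hint8 a,
      integral_fourpow_expand hindep hmeas hint8 b,
      Finset.sum_mul_sum, ← Finset.sum_sub_distrib]
    refine Finset.sum_congr rfl fun g _ => ?_
    rw [← Finset.sum_sub_distrib]
    refine Finset.sum_congr rfl fun h _ => ?_
    ring
  rw [hexp]
  calc |∑ g : Fin 4 → ι, ∑ h : Fin 4 → ι,
          ((∏ r, a (g r)) * (∏ r, b (h r)))
            * ((∫ ω, (∏ r, X (g r) ω) * (∏ r, X (h r) ω))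
              - (∫ ω, ∏ r, X (g r) ω) * (∫ ω, ∏ r, X (h r) ω))|
      ≤ ∑ g : Fin 4 → ι, ∑ h : Fin 4 → ι,
          |((∏ r, a (g r)) * (∏ r, b (h r)))
            * ((∫ ω, (∏ r, X (g r) ω) * (∏ r, X (h r) ω))
              - (∫ ω, ∏ r, X (g r) ω) * (∫ ω, ∏ r, X (h r) ω))| := by
        refine le_trans (Finset.abs_sum_le_sum_abs _ _) ?_
        exact Finset.sum_le_sum fun g _ => Finset.abs_sum_le_sum_abs _ _
    _ ≤ ∑ g : Fin 4 → ι, ∑ h : Fin 4 → ι, 2 * (1 + μ8) ^ 8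
          * ∑ r : Fin 4, ∑ r' : Fin 4,
            (if g r = h r' then (∏ t, |a (g t)|) * (∏ t, |b (h t)|) else 0) := by
        exact Finset.sum_le_sum fun g _ => Finset.sum_le_sum fun h _ =>
          cov_term_bound hμ8 hindep hmeas hint8 hm8 a b g h
    _ = 2 * (1 + μ8) ^ 8 * ∑ g : Fin 4 → ι, ∑ h : Fin 4 → ι,
          ∑ r : Fin 4, ∑ r' : Fin 4,
            (if g r = h r' then (∏ t, |a (g t)|) * (∏ t, |b (h t)|) else 0) := by
        rw [Finset.mul_sum]
        exact Finset.sum_congr rfl fun g _ => by rw [Finset.mul_sum]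
    _ = 2 * (1 + μ8) ^ 8 * ∑ r : Fin 4, ∑ r' : Fin 4,
          ∑ g : Fin 4 → ι, ∑ h : Fin 4 → ι,
            (if g r = h r' then (∏ t, |a (g t)|) * (∏ t, |b (h t)|) else 0) := by
        rw [sum_swap4]
    _ = 2 * (1 + μ8) ^ 8 * ∑ r : Fin 4, ∑ r' : Fin 4,
          ((∑ v, |a v| * |b v|) * ((∑ v, |a v|) ^ 3 * (∑ v, |b v|) ^ 3)) := by
        congr 1
        exact Finset.sum_congr rfl fun r _ => Finset.sum_congr rfl fun r' _ =>
          inner_double_sum_eval a b r r'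
    _ = 32 * (1 + μ8) ^ 8
          * ((∑ v, |a v| * |b v|) * ((∑ v, |a v|) ^ 3 * (∑ v, |b v|) ^ 3)) := by
        rw [Finset.sum_const, Finset.sum_const]
        simp
        ring

end IndepAux



/-- Along any sequence of panel dimensions `(n_m, T_m)` with `n_m ≥ 2`,
`T_m ≥ 2` and `n_m T_m → ∞`, if `ε` are i.i.d. with mean `0`, variance `σ²`, fourth moment
`μ₄` and finite eighth moment, `ε* = Jε`, `π₁ = Σ_r (J_rr)²` and `π₂ = Σ_r Σ_s (J_rs)⁴`,
then `E[(Σ_i (ε*_i)⁴/π₂)²] − (μ₄ − 3σ⁴ + 3σ⁴π₁/π₂)² → 0`. -/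
theorem second_moment_fourth_powers_limit {Ω : Type*} [MeasureSpace Ω]
    [IsProbabilityMeasure (ℙ : Measure Ω)]
    (n T : ℕ → ℕ) (hn : ∀ m, 2 ≤ n m) (hT : ∀ m, 2 ≤ T m)
    (hNT : Tendsto (fun m => n m * T m) atTop atTop)
    (J : (m : ℕ) → Matrix (Fin (T m) × Fin (n m)) (Fin (T m) × Fin (n m)) ℝ)
    (hJ : ∀ m, J m = twoWayJ (n m) (T m))
    (π₁ π₂ : ℕ → ℝ)
    (hπ₁ : ∀ m, π₁ m = ∑ r, (J m r r) ^ 2) (hπ₂ : ∀ m, π₂ m = ∑ r, ∑ s, (J m r s) ^ 4)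
    (ε : (m : ℕ) → (Fin (T m) × Fin (n m)) → Ω → ℝ)
    (hmeas : ∀ m i, Measurable (ε m i))
    (hindep : ∀ m,
      iIndepFun (m := fun _ : Fin (T m) × Fin (n m) => (inferInstance : MeasurableSpace ℝ)) (ε m) ℙ)
    (ν : Measure ℝ)
    (hident : ∀ m i, Measure.map (ε m i) ℙ = ν)
    (σ2 μ4 μ8 : ℝ)
    (hmean : ∀ m i, ∫ ω, ε m i ω = 0)
    (hvar : ∀ m i, ∫ ω, (ε m i ω) ^ 2 = σ2)
    (hm4 : ∀ m i, ∫ ω, (ε m i ω) ^ 4 = μ4)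
    (hm8 : ∀ m i, ∫ ω, (ε m i ω) ^ 8 = μ8)
    (hint8 : ∀ m i, Integrable (fun ω => (ε m i ω) ^ 8) ℙ) :
    Tendsto (fun m =>
        (∫ ω, ((∑ i, ((J m).mulVec (fun j => ε m j ω) i) ^ 4) / π₂ m) ^ 2)
          - (μ4 - 3 * σ2 ^ 2 + 3 * σ2 ^ 2 * (π₁ m / π₂ m)) ^ 2)
      atTop (nhds 0) := by
  have hμ8 : 0 ≤ μ8 := by
    have hT0 : 0 < T 0 := by have := hT 0; omega
    have hn0 : 0 < n 0 := by have := hn 0; omega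
    rw [← hm8 0 (⟨0, hT0⟩, ⟨0, hn0⟩)]
    exact integral_nonneg (fun ω => by positivity)
  set C : ℝ := 137438953472 * (1 + μ8) ^ 8 with hC
  have key : ∀ m, |(∫ ω, ((∑ i, ((J m).mulVec (fun j => ε m j ω) i) ^ 4) / π₂ m) ^ 2)
      - (μ4 - 3 * σ2 ^ 2 + 3 * σ2 ^ 2 * (π₁ m / π₂ m)) ^ 2| ≤ C / ((n m * T m : ℕ) : ℝ) := by
    intro m
    have hn2 := hn m
    have hT2 := hT m
    have hNr : ((n m * T m : ℕ) : ℝ) = (n m : ℝ) * (T m : ℝ) := by push_cast; ring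
    have hnpos : (0:ℝ) < (n m : ℝ) := by exact_mod_cast (by omega : 0 < n m)
    have hTpos : (0:ℝ) < (T m : ℝ) := by exact_mod_cast (by omega : 0 < T m)
    have hNpos : (0:ℝ) < ((n m * T m : ℕ) : ℝ) := by rw [hNr]; positivity
    have hπ₂lb : ((n m : ℝ) * (T m : ℝ)) / 256 ≤ π₂ m := by
      rw [hπ₂ m, hJ m]; exact twoWayJ_four_sum hn2 hT2
    have hπ₂pos : 0 < π₂ m := lt_of_lt_of_le (by positivity) hπ₂lb
    -- per-row moment values
    have hY : ∀ i, (∫ ω, (∑ v, J m i v * ε m v ω) ^ 4)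
        = μ4 * (∑ v, (J m i v) ^ 4)
          + 3 * σ2 ^ 2 * ((∑ v, (J m i v) ^ 2) ^ 2 - ∑ v, (J m i v) ^ 4) := fun i =>
      integral_sum_four (hindep m) (hmeas m) (hint8 m) (hmean m) (hvar m) (hm4 m)
        Finset.univ (fun v => J m i v)
    have hsq_row : ∀ i, (∑ v, (J m i v) ^ 2) = J m i i := by
      intro i; rw [hJ m]; exact twoWayJ_sq_row_sum hn2 hT2 i
    have hYint : ∀ i, Integrable (fun ω => (∑ v, J m i v * ε m v ω) ^ 4) := fun i =>
      integrable_sum_pow (hindep m) (hmeas m) (hint8 m) Finset.univ (fun v => J m i v)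
        (by norm_num)
    have hESval : (∑ i, ∫ ω, (∑ v, J m i v * ε m v ω) ^ 4)
        = μ4 * π₂ m + 3 * σ2 ^ 2 * (π₁ m - π₂ m) := by
      rw [Finset.sum_congr rfl fun i _ => by rw [hY i, hsq_row i]]
      rw [Finset.sum_add_distrib, ← Finset.mul_sum, ← Finset.mul_sum,
        Finset.sum_sub_distrib, hπ₂ m, hπ₁ m]
    have hiYY : ∀ i k, Integrable
        (fun ω => (∑ v, J m i v * ε m v ω) ^ 4 * (∑ v, J m k v * ε m v ω) ^ 4) := fun i k =>
      integrable_fourpow_mul (hindep m) (hmeas m) (hint8 m) (fun v => J m i v) (fun v => J m k v)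
    have hS2 : (∫ ω, (∑ i, (∑ v, J m i v * ε m v ω) ^ 4) ^ 2)
        = ∑ i, ∑ k, ∫ ω, (∑ v, J m i v * ε m v ω) ^ 4 * (∑ v, J m k v * ε m v ω) ^ 4 := by
      have hptw : (fun ω => (∑ i, (∑ v, J m i v * ε m v ω) ^ 4) ^ 2)
          = fun ω => ∑ i, ∑ k,
              (∑ v, J m i v * ε m v ω) ^ 4 * (∑ v, J m k v * ε m v ω) ^ 4 := by
        funext ω; rw [sq, Finset.sum_mul_sum]
      rw [hptw, integral_finset_sum _ (fun i _ => integrable_finset_sum _ (fun k _ => hiYY i k))]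
      exact Finset.sum_congr rfl fun i _ => integral_finset_sum _ (fun k _ => hiYY i k)
    -- row/column sums of |J|
    have hrowsum : ∀ i, (∑ v, |J m i v|) ≤ 4 := by
      intro i; rw [hJ m]; exact twoWayJ_abs_row_sum hn2 hT2 i
    have hcolsum : ∀ v, (∑ i, |J m i v|) ≤ 4 := by
      intro v; rw [hJ m]; exact twoWayJ_abs_col_sum hn2 hT2 v
    -- covariance bound per pair
    have hterm : ∀ i k, |(∫ ω, (∑ v, J m i v * ε m v ω) ^ 4 * (∑ v, J m k v * ε m v ω) ^ 4)
          - (∫ ω, (∑ v, J m i v * ε m v ω) ^ 4) * (∫ ω, (∑ v, J m k v * ε m v ω) ^ 4)|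
        ≤ 131072 * (1 + μ8) ^ 8 * ∑ v, |J m i v| * |J m k v| := by
      intro i k
      have hcb := cov_bound hμ8 (hindep m) (hmeas m) (hint8 m) (hm8 m)
        (fun v => J m i v) (fun v => J m k v)
      have hcubei : (∑ v, |J m i v|) ^ 3 ≤ 64 := by
        calc (∑ v, |J m i v|) ^ 3 ≤ 4 ^ 3 :=
            pow_le_pow_left₀ (Finset.sum_nonneg fun v _ => abs_nonneg _) (hrowsum i) 3
          _ = 64 := by norm_num
      have hcubek : (∑ v, |J m k v|) ^ 3 ≤ 64 := by
        calc (∑ v, |J m k v|) ^ 3 ≤ 4 ^ 3 :=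
            pow_le_pow_left₀ (Finset.sum_nonneg fun v _ => abs_nonneg _) (hrowsum k) 3
          _ = 64 := by norm_num
      have hcnn : (0:ℝ) ≤ ∑ v, |J m i v| * |J m k v| :=
        Finset.sum_nonneg fun v _ => by positivity
      have hc2 : (∑ v, |J m i v|) ^ 3 * (∑ v, |J m k v|) ^ 3 ≤ 4096 := by
        calc (∑ v, |J m i v|) ^ 3 * (∑ v, |J m k v|) ^ 3 ≤ 64 * 64 :=
            mul_le_mul hcubei hcubek (by positivity) (by norm_num)
          _ = 4096 := by norm_num
      calc |(∫ ω, (∑ v, J m i v * ε m v ω) ^ 4 * (∑ v, J m k v * ε m v ω) ^ 4)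
            - (∫ ω, (∑ v, J m i v * ε m v ω) ^ 4) * (∫ ω, (∑ v, J m k v * ε m v ω) ^ 4)|
          ≤ 32 * (1 + μ8) ^ 8 * ((∑ v, |J m i v| * |J m k v|)
              * ((∑ v, |J m i v|) ^ 3 * (∑ v, |J m k v|) ^ 3)) := hcb
        _ ≤ 32 * (1 + μ8) ^ 8 * ((∑ v, |J m i v| * |J m k v|) * 4096) := by
            refine mul_le_mul_of_nonneg_left ?_ (by positivity)
            exact mul_le_mul_of_nonneg_left hc2 hcnn
        _ = 131072 * (1 + μ8) ^ 8 * ∑ v, |J m i v| * |J m k v| := by ring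
    -- total bound on the double sum of |J| products
    have hcsum : (∑ i, ∑ k, ∑ v, |J m i v| * |J m k v|)
        ≤ 16 * ((T m : ℝ) * (n m : ℝ)) := by
      have hrow : ∀ i, (∑ k, ∑ v, |J m i v| * |J m k v|) ≤ 16 := by
        intro i
        rw [Finset.sum_comm]
        have hv : ∀ v, (∑ k, |J m i v| * |J m k v|) = |J m i v| * ∑ k, |J m k v| := by
          intro v; rw [Finset.mul_sum]
        rw [Finset.sum_congr rfl fun v _ => hv v]
        calc (∑ v, |J m i v| * ∑ k, |J m k v|) ≤ ∑ v, |J m i v| * 4 := by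
              refine Finset.sum_le_sum fun v _ => ?_
              exact mul_le_mul_of_nonneg_left (hcolsum v) (abs_nonneg _)
          _ = 4 * ∑ v, |J m i v| := by rw [← Finset.sum_mul]; ring
          _ ≤ 4 * 4 := by
              refine mul_le_mul_of_nonneg_left (hrowsum i) (by norm_num)
          _ = 16 := by norm_num
      calc (∑ i, ∑ k, ∑ v, |J m i v| * |J m k v|)
          ≤ ∑ i : Fin (T m) × Fin (n m), (16:ℝ) := Finset.sum_le_sum fun i _ => hrow i
        _ = 16 * ((T m : ℝ) * (n m : ℝ)) := by
            rw [Finset.sum_const, Finset.card_univ, nsmul_eq_mul]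
            simp [Fintype.card_prod]
            ring
    -- the deviation as a single quotient
    have hgoal_eq : (∫ ω, ((∑ i, ((J m).mulVec (fun j => ε m j ω) i) ^ 4) / π₂ m) ^ 2)
        = (∫ ω, (∑ i, (∑ v, J m i v * ε m v ω) ^ 4) ^ 2) / (π₂ m) ^ 2 := by
      have hrw : (fun ω => ((∑ i, ((J m).mulVec (fun j => ε m j ω) i) ^ 4) / π₂ m) ^ 2)
          = fun ω => ((∑ i, (∑ v, J m i v * ε m v ω) ^ 4) ^ 2) / (π₂ m) ^ 2 := by
        funext ω
        rw [div_pow]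
        congr 2
      rw [hrw, integral_div]
    have htv : μ4 - 3 * σ2 ^ 2 + 3 * σ2 ^ 2 * (π₁ m / π₂ m)
        = (μ4 * π₂ m + 3 * σ2 ^ 2 * (π₁ m - π₂ m)) / π₂ m := by
      field_simp
      ring
    have hdiff : (∫ ω, ((∑ i, ((J m).mulVec (fun j => ε m j ω) i) ^ 4) / π₂ m) ^ 2)
          - (μ4 - 3 * σ2 ^ 2 + 3 * σ2 ^ 2 * (π₁ m / π₂ m)) ^ 2
        = (∑ i, ∑ k, ((∫ ω, (∑ v, J m i v * ε m v ω) ^ 4 * (∑ v, J m k v * ε m v ω) ^ 4)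
            - (∫ ω, (∑ v, J m i v * ε m v ω) ^ 4) * (∫ ω, (∑ v, J m k v * ε m v ω) ^ 4)))
          / (π₂ m) ^ 2 := by
      rw [hgoal_eq, htv, ← hESval, hS2, div_pow]
      rw [div_sub_div_same]
      congr 1
      rw [sq, Finset.sum_mul_sum, ← Finset.sum_sub_distrib]
      refine Finset.sum_congr rfl fun i _ => ?_
      rw [← Finset.sum_sub_distrib]
    rw [hdiff]
    -- bound it
    have hnum : |∑ i, ∑ k, ((∫ ω, (∑ v, J m i v * ε m v ω) ^ 4 * (∑ v, J m k v * ε m v ω) ^ 4)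
          - (∫ ω, (∑ v, J m i v * ε m v ω) ^ 4) * (∫ ω, (∑ v, J m k v * ε m v ω) ^ 4))|
        ≤ 2097152 * (1 + μ8) ^ 8 * ((T m : ℝ) * (n m : ℝ)) := by
      calc |∑ i, ∑ k, ((∫ ω, (∑ v, J m i v * ε m v ω) ^ 4 * (∑ v, J m k v * ε m v ω) ^ 4)
            - (∫ ω, (∑ v, J m i v * ε m v ω) ^ 4) * (∫ ω, (∑ v, J m k v * ε m v ω) ^ 4))|
          ≤ ∑ i, ∑ k, |(∫ ω, (∑ v, J m i v * ε m v ω) ^ 4 * (∑ v, J m k v * ε m v ω) ^ 4)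
            - (∫ ω, (∑ v, J m i v * ε m v ω) ^ 4) * (∫ ω, (∑ v, J m k v * ε m v ω) ^ 4)| := by
            refine le_trans (Finset.abs_sum_le_sum_abs _ _) ?_
            exact Finset.sum_le_sum fun i _ => Finset.abs_sum_le_sum_abs _ _
        _ ≤ ∑ i, ∑ k, 131072 * (1 + μ8) ^ 8 * ∑ v, |J m i v| * |J m k v| :=
            Finset.sum_le_sum fun i _ => Finset.sum_le_sum fun k _ => hterm i k
        _ = 131072 * (1 + μ8) ^ 8 * ∑ i, ∑ k, ∑ v, |J m i v| * |J m k v| := by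
            rw [Finset.mul_sum]
            exact Finset.sum_congr rfl fun i _ => by rw [Finset.mul_sum]
        _ ≤ 131072 * (1 + μ8) ^ 8 * (16 * ((T m : ℝ) * (n m : ℝ))) := by
            exact mul_le_mul_of_nonneg_left hcsum (by positivity)
        _ = 2097152 * (1 + μ8) ^ 8 * ((T m : ℝ) * (n m : ℝ)) := by ring
    have habsdiv : |(∑ i, ∑ k, ((∫ ω, (∑ v, J m i v * ε m v ω) ^ 4
            * (∑ v, J m k v * ε m v ω) ^ 4)
          - (∫ ω, (∑ v, J m i v * ε m v ω) ^ 4) * (∫ ω, (∑ v, J m k v * ε m v ω) ^ 4)))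
          / (π₂ m) ^ 2|
        = |∑ i, ∑ k, ((∫ ω, (∑ v, J m i v * ε m v ω) ^ 4 * (∑ v, J m k v * ε m v ω) ^ 4)
          - (∫ ω, (∑ v, J m i v * ε m v ω) ^ 4) * (∫ ω, (∑ v, J m k v * ε m v ω) ^ 4))|
          / (π₂ m) ^ 2 := by
      rw [abs_div, abs_of_pos (by positivity : (0:ℝ) < (π₂ m) ^ 2)]
    rw [habsdiv]
    have hdenlb : (((n m : ℝ) * (T m : ℝ)) / 256) ^ 2 ≤ (π₂ m) ^ 2 :=
      pow_le_pow_left₀ (by positivity) hπ₂lb 2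
    calc |∑ i, ∑ k, ((∫ ω, (∑ v, J m i v * ε m v ω) ^ 4 * (∑ v, J m k v * ε m v ω) ^ 4)
          - (∫ ω, (∑ v, J m i v * ε m v ω) ^ 4) * (∫ ω, (∑ v, J m k v * ε m v ω) ^ 4))|
          / (π₂ m) ^ 2
        ≤ (2097152 * (1 + μ8) ^ 8 * ((T m : ℝ) * (n m : ℝ))) / (π₂ m) ^ 2 := by
          exact div_le_div_of_nonneg_right hnum (by positivity)
      _ ≤ (2097152 * (1 + μ8) ^ 8 * ((T m : ℝ) * (n m : ℝ)))
            / (((n m : ℝ) * (T m : ℝ)) / 256) ^ 2 := by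
          refine div_le_div_of_nonneg_left (by positivity) (by positivity) hdenlb
      _ = C / ((n m * T m : ℕ) : ℝ) := by
          rw [hC, hNr]
          field_simp
          ring
  have hdiv : Tendsto (fun m => C / ((n m * T m : ℕ) : ℝ)) atTop (nhds 0) :=
    Tendsto.div_atTop tendsto_const_nhds (tendsto_natCast_atTop_atTop.comp hNT)
  exact squeeze_zero_norm (fun m => by simpa [Real.norm_eq_abs] using key m) hdiv
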